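/- arXiv:2108.07193 — 2 statements merged into one kernel-verified Lean document; each statement's English description precedes it below -/
import Mathlib

section
/- Let u : ℝⁿ → ℝᵐ be 1-Lipschitz, let S be a leaf of u with tangent space V, let P be the orthogonal projection of ℝⁿ onto V, let T : V → ℝᵐ be the linear isometry with u(x) − u(y) = T(x − y) for x, y ∈ S, and let Q be the orthogonal projection of ℝᵐ onto T(V). Then the map Q∘u is differentiable at every point z₀ of the relative interior of S, with derivative D(Qu)(z₀) = T∘P. -/
/-- A set `S ⊆ ℝⁿ` is a *leaf* of `u : ℝⁿ → ℝᵐ` if `u` restricted to `S` is an isometry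
and `S` is maximal with this property. -/
def IsLeaf {n m : ℕ} (u : EuclideanSpace ℝ (Fin n) → EuclideanSpace ℝ (Fin m))
    (S : Set (EuclideanSpace ℝ (Fin n))) : Prop :=
  (∀ x ∈ S, ∀ y ∈ S, ‖u x - u y‖ = ‖x - y‖) ∧
  ∀ y ∉ S, ∃ x ∈ S, ‖u y - u x‖ < ‖y - x‖

/-- The orthogonal projection of a Euclidean space onto a subspace `V`, as an
endomorphism. -/
noncomputable def projL {N : ℕ} (V : Submodule ℝ (EuclideanSpace ℝ (Fin N))) :
    EuclideanSpace ℝ (Fin N) →L[ℝ] EuclideanSpace ℝ (Fin N) :=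
  V.subtypeL.comp (Submodule.orthogonalProjectionOnto V)

/-- Auxiliary quadratic estimate: if `T` is isometric on `V`, `‖w‖ ≤ ‖h‖`, and
`‖w - T v‖ ≤ ‖h - v‖` for all small `v ∈ V`, then the projection of `w - T (P h)` onto
`T(V)` is quadratically small. -/
lemma aux_bound {N M : ℕ} (V : Submodule ℝ (EuclideanSpace ℝ (Fin N)))
    (T : EuclideanSpace ℝ (Fin N) →L[ℝ] EuclideanSpace ℝ (Fin M))
    (hTiso : ∀ v ∈ V, ‖T v‖ = ‖v‖)
    (ε : ℝ) (hε : 0 < ε)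
    (h : EuclideanSpace ℝ (Fin N)) (w : EuclideanSpace ℝ (Fin M))
    (hwh : ‖w‖ ≤ ‖h‖)
    (hA : ∀ v ∈ V, ‖v‖ ≤ ε → ‖w - T v‖ ≤ ‖h - v‖) :
    ‖projL (V.map (T : EuclideanSpace ℝ (Fin N) →ₗ[ℝ] EuclideanSpace ℝ (Fin M))) w - T (projL V h)‖ ≤ ‖h‖ ^ 2 / (2 * ε) := by
  have hTinner : ∀ a ∈ V, ∀ b ∈ V, (inner ℝ (T a) (T b) : ℝ) = inner ℝ a b := by
    intro a ha b hb
    have h1 := norm_add_sq_real (T a) (T b)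
    have h2 := norm_add_sq_real a b
    rw [← map_add, hTiso _ (V.add_mem ha hb), hTiso _ ha, hTiso _ hb] at h1
    linarith
  have hPm : projL V h ∈ V := SetLike.coe_mem _
  have hδ0 : 0 ≤ (‖h‖ ^ 2 - ‖w‖ ^ 2) / 2 := by nlinarith [norm_nonneg w, norm_nonneg h]
  have stepA : ∀ v ∈ V, ‖v‖ ≤ ε →
      (inner ℝ h v : ℝ) - (‖h‖ ^ 2 - ‖w‖ ^ 2) / 2 ≤ inner ℝ w (T v) := by
    intro v hv hvε
    have hle := hA v hv hvε
    have hsq : ‖w - T v‖ ^ 2 ≤ ‖h - v‖ ^ 2 := by nlinarith [norm_nonneg (w - T v)]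
    rw [norm_sub_sq_real, norm_sub_sq_real, hTiso _ hv] at hsq
    linarith
  have stepB : ∀ v ∈ V, ‖v‖ ≤ ε →
      |(inner ℝ (w - T (projL V h)) (T v) : ℝ)| ≤ (‖h‖ ^ 2 - ‖w‖ ^ 2) / 2 := by
    intro v hv hvε
    have e1 : (inner ℝ (T (projL V h)) (T v) : ℝ) = inner ℝ (projL V h) v :=
      hTinner _ hPm _ hv
    have e2 : (inner ℝ h v : ℝ) = inner ℝ (projL V h) v := by
      have h0 : (inner ℝ (h - projL V h) v : ℝ) = 0 :=
        Submodule.starProjection_inner_eq_zero h v hv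
      have h1 := inner_sub_left (𝕜 := ℝ) h (projL V h) v
      rw [h0] at h1; linarith
    have hA1 := stepA v hv hvε
    have hA2 := stepA (-v) (V.neg_mem hv) (by simpa using hvε)
    rw [map_neg, inner_neg_right, inner_neg_right] at hA2
    rw [abs_le, inner_sub_left, e1, ← e2]
    constructor <;> linarith
  have stepC : ∀ v ∈ V,
      |(inner ℝ (w - T (projL V h)) (T v) : ℝ)| ≤ (‖h‖ ^ 2 - ‖w‖ ^ 2) / 2 / ε * ‖v‖ := by
    intro v hv
    rcases eq_or_ne v 0 with rfl | hv0
    · simp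
    · have hnv : 0 < ‖v‖ := norm_pos_iff.mpr hv0
      have hs := stepB ((ε / ‖v‖) • v) (V.smul_mem _ hv) (by
        rw [norm_smul, Real.norm_eq_abs, abs_of_pos (by positivity),
          div_mul_cancel₀ _ hnv.ne'])
      rw [map_smul, inner_smul_right, abs_mul,
        abs_of_pos (show (0:ℝ) < ε / ‖v‖ by positivity)] at hs
      calc |(inner ℝ (w - T (projL V h)) (T v) : ℝ)|
          = ‖v‖ / ε * (ε / ‖v‖ * |(inner ℝ (w - T (projL V h)) (T v) : ℝ)|) := by
            field_simp
        _ ≤ ‖v‖ / ε * ((‖h‖ ^ 2 - ‖w‖ ^ 2) / 2) := by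
            exact mul_le_mul_of_nonneg_left hs (by positivity)
        _ = (‖h‖ ^ 2 - ‖w‖ ^ 2) / 2 / ε * ‖v‖ := by ring
  have stepD : ‖projL (V.map (T : EuclideanSpace ℝ (Fin N) →ₗ[ℝ] EuclideanSpace ℝ (Fin M))) (w - T (projL V h))‖ ≤ (‖h‖ ^ 2 - ‖w‖ ^ 2) / 2 / ε := by
    have hqW : projL (V.map (T : EuclideanSpace ℝ (Fin N) →ₗ[ℝ] EuclideanSpace ℝ (Fin M))) (w - T (projL V h)) ∈ V.map (T : EuclideanSpace ℝ (Fin N) →ₗ[ℝ] EuclideanSpace ℝ (Fin M)) := SetLike.coe_mem _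
    have h0 : (inner ℝ ((w - T (projL V h)) - projL (V.map (T : EuclideanSpace ℝ (Fin N) →ₗ[ℝ] EuclideanSpace ℝ (Fin M))) (w - T (projL V h)))
        (projL (V.map (T : EuclideanSpace ℝ (Fin N) →ₗ[ℝ] EuclideanSpace ℝ (Fin M))) (w - T (projL V h))) : ℝ) = 0 :=
      Submodule.starProjection_inner_eq_zero _ _ hqW
    have hxq : (inner ℝ (w - T (projL V h)) (projL (V.map (T : EuclideanSpace ℝ (Fin N) →ₗ[ℝ] EuclideanSpace ℝ (Fin M))) (w - T (projL V h))) : ℝ)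
        = ‖projL (V.map (T : EuclideanSpace ℝ (Fin N) →ₗ[ℝ] EuclideanSpace ℝ (Fin M))) (w - T (projL V h))‖ ^ 2 := by
      have h1 := inner_sub_left (𝕜 := ℝ) (w - T (projL V h))
        (projL (V.map (T : EuclideanSpace ℝ (Fin N) →ₗ[ℝ] EuclideanSpace ℝ (Fin M))) (w - T (projL V h))) (projL (V.map (T : EuclideanSpace ℝ (Fin N) →ₗ[ℝ] EuclideanSpace ℝ (Fin M))) (w - T (projL V h)))
      rw [h0, real_inner_self_eq_norm_sq] at h1
      linarith
    obtain ⟨v, hvV, hvq⟩ := Submodule.mem_map.mp hqW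
    have hb := stepC v hvV
    rw [ContinuousLinearMap.coe_coe] at hvq
    rw [hvq] at hb
    have hnq : ‖projL (V.map (T : EuclideanSpace ℝ (Fin N) →ₗ[ℝ] EuclideanSpace ℝ (Fin M))) (w - T (projL V h))‖ = ‖v‖ := by
      rw [← hvq]; exact hTiso _ hvV
    have hsq : ‖projL (V.map (T : EuclideanSpace ℝ (Fin N) →ₗ[ℝ] EuclideanSpace ℝ (Fin M))) (w - T (projL V h))‖ ^ 2
        ≤ (‖h‖ ^ 2 - ‖w‖ ^ 2) / 2 / ε * ‖projL (V.map (T : EuclideanSpace ℝ (Fin N) →ₗ[ℝ] EuclideanSpace ℝ (Fin M))) (w - T (projL V h))‖ := by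
      rw [← hxq, hnq] at *
      exact le_trans (le_abs_self _) hb
    nlinarith [norm_nonneg (projL (V.map (T : EuclideanSpace ℝ (Fin N) →ₗ[ℝ] EuclideanSpace ℝ (Fin M))) (w - T (projL V h))),
      div_nonneg hδ0 hε.le]
  have hTPh : projL (V.map (T : EuclideanSpace ℝ (Fin N) →ₗ[ℝ] EuclideanSpace ℝ (Fin M))) (T (projL V h)) = T (projL V h) := by
    show (V.map (T : EuclideanSpace ℝ (Fin N) →ₗ[ℝ] EuclideanSpace ℝ (Fin M))).starProjection (T (projL V h)) = _
    exact Submodule.starProjection_eq_self_iff.mpr ⟨projL V h, hPm, rfl⟩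
  calc ‖projL (V.map (T : EuclideanSpace ℝ (Fin N) →ₗ[ℝ] EuclideanSpace ℝ (Fin M))) w - T (projL V h)‖
      = ‖projL (V.map (T : EuclideanSpace ℝ (Fin N) →ₗ[ℝ] EuclideanSpace ℝ (Fin M))) (w - T (projL V h))‖ := by rw [map_sub, hTPh]
    _ ≤ (‖h‖ ^ 2 - ‖w‖ ^ 2) / 2 / ε := stepD
    _ ≤ ‖h‖ ^ 2 / (2 * ε) := by
        rw [div_div]
        apply div_le_div_of_nonneg_right ?_ (by positivity)
        nlinarith [norm_nonneg w]

/-- Let `S` be a leaf of a `1`-Lipschitz map `u : ℝⁿ → ℝᵐ` with tangent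
space `V = vectorSpan S`, let `P` be the orthogonal projection onto `V`, let `T` be the
linear isometry of `V` into `ℝᵐ` with `u x − u y = T (x − y)` on `S`, and let `Q` be the
orthogonal projection of `ℝᵐ` onto `T(V)`.  Then `Q ∘ u` is differentiable at every
point `z₀` of the relative interior of `S`, with derivative `T ∘ P`. -/
theorem stmt_4 {n m : ℕ} (u : EuclideanSpace ℝ (Fin n) → EuclideanSpace ℝ (Fin m))
    (hu : LipschitzWith 1 u)
    (S : Set (EuclideanSpace ℝ (Fin n))) (hS : IsLeaf u S)
    (T : EuclideanSpace ℝ (Fin n) →L[ℝ] EuclideanSpace ℝ (Fin m))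
    (hTiso : ∀ v ∈ vectorSpan ℝ S, ‖T v‖ = ‖v‖)
    (hT : ∀ x ∈ S, ∀ y ∈ S, u x - u y = T (x - y)) :
    ∀ z₀ ∈ intrinsicInterior ℝ S,
      HasFDerivAt (fun z => projL ((vectorSpan ℝ S).map (T : EuclideanSpace ℝ (Fin n) →ₗ[ℝ] EuclideanSpace ℝ (Fin m))) (u z))
        (T.comp (projL (vectorSpan ℝ S))) z₀ := by
  intro z₀ hz₀
  have hz₀S : z₀ ∈ S := intrinsicInterior_subset hz₀
  obtain ⟨ε, hε, hball⟩ : ∃ ε > 0, ∀ v ∈ vectorSpan ℝ S, ‖v‖ ≤ ε → z₀ + v ∈ S := by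
    obtain ⟨p, hp, hpz⟩ := hz₀
    obtain ⟨δ, hδ, hδsub⟩ := Metric.mem_nhds_iff.mp (mem_interior_iff_mem_nhds.mp hp)
    refine ⟨δ / 2, by positivity, fun v hv hvδ => ?_⟩
    have hmem : z₀ + v ∈ affineSpan ℝ S := by
      have : v +ᵥ (p : EuclideanSpace ℝ (Fin n)) ∈ affineSpan ℝ S :=
        AffineSubspace.vadd_mem_of_mem_direction
          (by rw [direction_affineSpan]; exact hv) p.2
      simpa [hpz, add_comm] using this
    have hq : (⟨z₀ + v, hmem⟩ : affineSpan ℝ S) ∈ Metric.ball p δ := by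
      rw [Metric.mem_ball, Subtype.dist_eq]
      simp only [hpz]
      rw [dist_eq_norm]
      simpa using lt_of_le_of_lt hvδ (by linarith)
    exact hδsub hq
  have key : ∀ z, ‖projL ((vectorSpan ℝ S).map (T : EuclideanSpace ℝ (Fin n) →ₗ[ℝ] EuclideanSpace ℝ (Fin m))) (u z - u z₀)
      - T (projL (vectorSpan ℝ S) (z - z₀))‖ ≤ ‖z - z₀‖ ^ 2 / (2 * ε) := by
    intro z
    refine aux_bound _ T hTiso ε hε _ _ ?_ ?_
    · simpa [dist_eq_norm] using hu.dist_le_mul z z₀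
    · intro v hv hvε
      have hzS : z₀ + v ∈ S := hball v hv hvε
      have huv : u (z₀ + v) - u z₀ = T v := by
        have := hT (z₀ + v) hzS z₀ hz₀S
        simpa using this
      have h1 : u z - u z₀ - T v = u z - u (z₀ + v) := by
        rw [← huv]; abel
      have h2 : z - z₀ - v = z - (z₀ + v) := by abel
      rw [h1, h2]
      simpa [dist_eq_norm] using hu.dist_le_mul z (z₀ + v)
  rw [hasFDerivAt_iff_isLittleO_nhds_zero, Asymptotics.isLittleO_iff]
  intro c hc
  filter_upwards [Metric.ball_mem_nhds (0 : EuclideanSpace ℝ (Fin n))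
    (show (0:ℝ) < 2 * ε * c by positivity)] with y hy
  have hm := key (z₀ + y)
  simp only [add_sub_cancel_left] at hm
  have heq : projL ((vectorSpan ℝ S).map (T : EuclideanSpace ℝ (Fin n) →ₗ[ℝ] EuclideanSpace ℝ (Fin m))) (u (z₀ + y))
      - projL ((vectorSpan ℝ S).map (T : EuclideanSpace ℝ (Fin n) →ₗ[ℝ] EuclideanSpace ℝ (Fin m))) (u z₀)
      - (T.comp (projL (vectorSpan ℝ S))) y
      = projL ((vectorSpan ℝ S).map (T : EuclideanSpace ℝ (Fin n) →ₗ[ℝ] EuclideanSpace ℝ (Fin m))) (u (z₀ + y) - u z₀)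
        - T (projL (vectorSpan ℝ S) y) := by
    rw [map_sub]; rfl
  rw [heq]
  refine hm.trans ?_
  rw [Metric.mem_ball, dist_zero_right] at hy
  rw [div_le_iff₀ (by positivity), pow_two]
  nlinarith [norm_nonneg y, hε.le, hc.le, hy.le]
end

section
/- Let u : ℝⁿ → ℝᵐ be 1-Lipschitz and let k ∈ {1,…,m}. A point x ∈ ℝⁿ belongs to the relative interior of a leaf of u of dimension k if and only if α_k(x) > 0 and β_{k+1}(x) = 0 (where β_{m+1} ≡ 0 by convention). -/
open RealInnerProductSpace
set_option maxHeartbeats 1000000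
section H
variable {G : Type*} [NormedAddCommGroup G] [InnerProductSpace ℝ G]
variable {G' : Type*} [NormedAddCommGroup G'] [InnerProductSpace ℝ G']

lemma polar_inner {a b : G} {a' b' : G'} (ha : ‖a'‖ = ‖a‖) (hb : ‖b'‖ = ‖b‖)
    (hab : ‖a' - b'‖ = ‖a - b‖) : ⟪a', b'⟫ = ⟪a, b⟫ := by
  have h1 := norm_sub_sq_real a' b'
  have h2 := norm_sub_sq_real a b
  rw [hab, ha, hb] at h1
  nlinarith [h1, h2]

lemma onorm_sum {N : ℕ} {e : Fin N → G} (he : Orthonormal ℝ e) (c : Fin N → ℝ) :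
    ‖∑ i, c i • e i‖ ^ 2 = ∑ i, (c i) ^ 2 := by
  rw [← real_inner_self_eq_norm_sq, Orthonormal.inner_sum he c c]
  simp [pow_two]

lemma segment_rigidity {E F : Type*} [NormedAddCommGroup E] [InnerProductSpace ℝ E]
    [NormedAddCommGroup F] [InnerProductSpace ℝ F]
    {u : E → F} (hu : LipschitzWith 1 u) {p q : E}
    (h : ‖u p - u q‖ = ‖p - q‖) {t : ℝ} (ht0 : 0 ≤ t) (ht1 : t ≤ 1) :
    u ((1-t) • p + t • q) = (1-t) • u p + t • u q := by
  rcases eq_or_ne p q with rfl | hpq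
  · have : (1-t) • p + t • p = p := by module
    rw [this]; module
  set y := (1-t) • p + t • q with hy
  have hyp : y - p = t • (q - p) := by rw [hy]; module
  have hqy : q - y = (1-t) • (q - p) := by rw [hy]; module
  set a := u y - u p with hadef
  set b := u q - u y with hbdef
  have hab : a + b = u q - u p := by rw [hadef, hbdef]; abel
  set d := ‖q - p‖ with hd
  have hd0 : 0 < d := by
    rw [hd, norm_pos_iff, sub_ne_zero]; exact fun hh => hpq hh.symm
  have hna : ‖a‖ ≤ t * d := by
    have h1 := hu.dist_le_mul y p
    rw [NNReal.coe_one, one_mul, dist_eq_norm, dist_eq_norm, hyp, norm_smul,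
      Real.norm_eq_abs, abs_of_nonneg ht0] at h1
    exact h1
  have hnb : ‖b‖ ≤ (1-t) * d := by
    have h1 := hu.dist_le_mul q y
    rw [NNReal.coe_one, one_mul, dist_eq_norm, dist_eq_norm, hqy, norm_smul,
      Real.norm_eq_abs, abs_of_nonneg (by linarith : (0:ℝ) ≤ 1 - t)] at h1
    exact h1
  have hnab : ‖a + b‖ = d := by
    rw [hab, norm_sub_rev, h, hd, norm_sub_rev]
  have hea : ‖a‖ = t * d := by nlinarith [norm_add_le a b]
  have heb : ‖b‖ = (1-t) * d := by nlinarith [norm_add_le a b]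
  have hip : ⟪a, b⟫ = ‖a‖ * ‖b‖ := by
    have h2 := norm_add_sq_real a b
    nlinarith
  have hkey : ‖b‖ • a = ‖a‖ • b := (inner_eq_norm_mul_iff_real).1 hip
  rw [hea, heb] at hkey
  have hkey2 : (1 - t) • a = t • b := by
    have h3 : d • ((1-t) • a) = d • (t • b) := by
      rw [smul_smul, smul_smul]
      rw [mul_comm (1-t) d, mul_comm t d] at hkey
      exact hkey
    exact smul_right_injective _ (ne_of_gt hd0) h3
  have ha_eq : a = t • (a + b) := by
    have h5 : a - t • (a + b) = (1-t) • a - t • b := by module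
    have h4 : a - t • (a + b) = 0 := by rw [h5, hkey2, sub_self]
    have := sub_eq_zero.1 h4
    exact this
  rw [hab] at ha_eq
  have : u y - u p = t • (u q - u p) := ha_eq
  have hfin : u y = (1-t) • u p + t • u q := by
    have h6 : u y = u p + t • (u q - u p) := by
      rw [← this]; abel
    rw [h6]; module
  exact hfin
end H


variable {n m : ℕ}
local notation "E" => EuclideanSpace ℝ (Fin n)
local notation "F" => EuclideanSpace ℝ (Fin m)

lemma iso_inner {u : E → F} {A : Set (EuclideanSpace ℝ (Fin n))}
    (hA : ∀ y ∈ A, ∀ z ∈ A, ‖u y - u z‖ = ‖y - z‖) {x y z : EuclideanSpace ℝ (Fin n)}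
    (hx : x ∈ A) (hy : y ∈ A) (hz : z ∈ A) :
    ⟪u y - u x, u z - u x⟫ = ⟪y - x, z - x⟫ := by
  refine polar_inner (hA y hy x hx) (hA z hz x hx) ?_
  rw [sub_sub_sub_cancel_right, sub_sub_sub_cancel_right]
  exact hA y hy z hz

/-- Coercion of an orthonormal basis of a submodule is orthonormal in the big space. -/
lemma onb_coe_orthonormal {ι : Type*} [Fintype ι] [DecidableEq ι] {V : Submodule ℝ (EuclideanSpace ℝ (Fin n))}
    (b : OrthonormalBasis ι ℝ V) :
    Orthonormal ℝ (fun i => (b i : EuclideanSpace ℝ (Fin n))) := by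
  have hb := b.orthonormal
  rw [orthonormal_iff_ite] at hb ⊢
  intro i j
  rw [← Submodule.coe_inner]
  exact hb i j

lemma onb_coe_repr {ι : Type*} [Fintype ι] [DecidableEq ι] {V : Submodule ℝ (EuclideanSpace ℝ (Fin n))}
    (b : OrthonormalBasis ι ℝ V) {v : EuclideanSpace ℝ (Fin n)}
    (hv : v ∈ V) : ∑ i, ⟪(b i : EuclideanSpace ℝ (Fin n)), v⟫ • (b i : EuclideanSpace ℝ (Fin n)) = v := by
  have h1 : ((∑ i, (⟪b i, (⟨v, hv⟩ : V)⟫ : ℝ) • b i : V) : EuclideanSpace ℝ (Fin n))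
      = ∑ i, ⟪(b i : EuclideanSpace ℝ (Fin n)), v⟫ • (b i : EuclideanSpace ℝ (Fin n)) := by
    simp [Submodule.coe_inner]
  rw [← h1, b.sum_repr' ⟨v, hv⟩]

/-- Core construction: an isometric set containing a `V`-ball around `x` yields a
continuous linear map isometric on `V` representing `u` near `x`. -/
lemma exists_clm_of_ball {u : EuclideanSpace ℝ (Fin n) → EuclideanSpace ℝ (Fin m)}
    {A : Set (EuclideanSpace ℝ (Fin n))}
    (hA : ∀ y ∈ A, ∀ z ∈ A, ‖u y - u z‖ = ‖y - z‖)
    {x : EuclideanSpace ℝ (Fin n)} (hx : x ∈ A)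
    {V : Submodule ℝ (EuclideanSpace ℝ (Fin n))} {ε : ℝ} (hε : 0 < ε)
    (hball : ∀ v ∈ V, ‖v‖ ≤ ε → x + v ∈ A) :
    ∃ T : EuclideanSpace ℝ (Fin n) →L[ℝ] EuclideanSpace ℝ (Fin m),
      (∀ v ∈ V, ‖T v‖ = ‖v‖) ∧ (∀ v ∈ V, ‖v‖ ≤ ε → u (x + v) - u x = T v) := by
  classical
  set b := stdOrthonormalBasis ℝ V
  set e : Fin (Module.finrank ℝ V) → EuclideanSpace ℝ (Fin n) := fun i => (b i : EuclideanSpace ℝ (Fin n)) with he_def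
  have he : Orthonormal ℝ e := onb_coe_orthonormal b
  have heV : ∀ i, e i ∈ V := fun i => SetLike.coe_mem _
  have hene : ∀ i, ‖e i‖ = 1 := fun i => he.1 i
  have hmem : ∀ i, x + ε • e i ∈ A := by
    intro i
    refine hball _ (V.smul_mem _ (heV i)) ?_
    rw [norm_smul, Real.norm_eq_abs, abs_of_pos hε, hene, mul_one]
  set w : Fin (Module.finrank ℝ V) → EuclideanSpace ℝ (Fin m) :=
    fun i => ε⁻¹ • (u (x + ε • e i) - u x) with hw_def
  have hinner : ∀ (y : EuclideanSpace ℝ (Fin n)), y ∈ A → ∀ i,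
      ⟪u y - u x, w i⟫ = ⟪y - x, e i⟫ := by
    intro y hy i
    have h1 : ⟪u y - u x, u (x + ε • e i) - u x⟫ = ⟪y - x, ε • e i⟫ := by
      have := iso_inner hA hx hy (hmem i)
      rwa [add_sub_cancel_left] at this
    rw [hw_def]
    simp only [real_inner_smul_right]
    rw [h1, real_inner_smul_right, ← mul_assoc, inv_mul_cancel₀ (ne_of_gt hε), one_mul]
  have hw : Orthonormal ℝ w := by
    rw [orthonormal_iff_ite]
    intro i j
    have h2 : ⟪w i, w j⟫ = ε⁻¹ * ⟪u (x + ε • e i) - u x, w j⟫ := by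
      rw [hw_def]
      conv_lhs => rw [real_inner_smul_left]
    rw [h2, hinner _ (hmem i) j, add_sub_cancel_left, real_inner_smul_left, ← mul_assoc,
      inv_mul_cancel₀ (ne_of_gt hε), one_mul]
    have := (orthonormal_iff_ite.1 he) i j
    exact this
  set T : EuclideanSpace ℝ (Fin n) →L[ℝ] EuclideanSpace ℝ (Fin m) :=
    ∑ i, (innerSL ℝ (e i)).smulRight (w i) with hT_def
  have hT_apply : ∀ v, T v = ∑ i, ⟪e i, v⟫ • w i := by
    intro v
    rw [hT_def]
    simp [ContinuousLinearMap.sum_apply]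
  have hTnorm : ∀ v ∈ V, ‖T v‖ = ‖v‖ := by
    intro v hv
    have h1 : ‖T v‖ ^ 2 = ∑ i, ⟪e i, v⟫ ^ 2 := by rw [hT_apply]; exact onorm_sum hw _
    have h2 : ‖v‖ ^ 2 = ∑ i, ⟪e i, v⟫ ^ 2 := by
      conv_lhs => rw [← onb_coe_repr b hv]
      exact onorm_sum he _
    nlinarith [norm_nonneg (T v), norm_nonneg v]
  refine ⟨T, hTnorm, ?_⟩
  intro v hv hvε
  have hyA : x + v ∈ A := hball v hv hvε
  have hg : ‖u (x + v) - u x‖ = ‖v‖ := by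
    have := hA _ hyA _ hx
    rwa [add_sub_cancel_left] at this
  have hgw : ∀ i, ⟪u (x + v) - u x, w i⟫ = ⟪e i, v⟫ := by
    intro i
    rw [hinner _ hyA i, add_sub_cancel_left, real_inner_comm]
  have hgT : ⟪u (x + v) - u x, T v⟫ = ‖v‖ ^ 2 := by
    rw [hT_apply, inner_sum]
    simp only [real_inner_smul_right, hgw]
    have h2 : ‖v‖ ^ 2 = ∑ i, ⟪e i, v⟫ ^ 2 := by
      conv_lhs => rw [← onb_coe_repr b hv]
      exact onorm_sum he _
    rw [h2]
    congr 1
    ext i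
    ring
  have hzero : ‖(u (x + v) - u x) - T v‖ ^ 2 = 0 := by
    rw [norm_sub_sq_real, hg, hgT, hTnorm v hv]
    ring
  have := pow_eq_zero_iff (n := 2) (by norm_num) |>.1 hzero
  rw [norm_eq_zero, sub_eq_zero] at this
  exact this


lemma relint_ball {S : Set (EuclideanSpace ℝ (Fin n))} {x : EuclideanSpace ℝ (Fin n)}
    (hx : x ∈ intrinsicInterior ℝ S) :
    x ∈ S ∧ ∃ ε > (0:ℝ), ∀ y, y ∈ affineSpan ℝ S → dist y x < ε → y ∈ S := by
  refine ⟨intrinsicInterior_subset hx, ?_⟩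
  obtain ⟨y0, hy0, rfl⟩ := mem_intrinsicInterior.1 hx
  obtain ⟨ε, hε, hball⟩ := Metric.mem_nhds_iff.1 (mem_interior_iff_mem_nhds.1 hy0)
  refine ⟨ε, hε, fun y hy hdist => ?_⟩
  have : (⟨y, hy⟩ : affineSpan ℝ S) ∈ Metric.ball y0 ε := by
    rw [Metric.mem_ball, Subtype.dist_eq]
    exact hdist
  exact hball this

lemma relint_of_ball {S : Set (EuclideanSpace ℝ (Fin n))} {x : EuclideanSpace ℝ (Fin n)}
    (hxS : x ∈ S) {ε : ℝ} (hε : 0 < ε)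
    (h : ∀ y, y ∈ affineSpan ℝ S → dist y x < ε → y ∈ S) : x ∈ intrinsicInterior ℝ S := by
  have hxA : x ∈ affineSpan ℝ S := subset_affineSpan ℝ S hxS
  refine mem_intrinsicInterior.2 ⟨⟨x, hxA⟩, ?_, rfl⟩
  rw [mem_interior_iff_mem_nhds, Metric.mem_nhds_iff]
  refine ⟨ε, hε, fun y hy => ?_⟩
  rw [Metric.mem_ball, Subtype.dist_eq] at hy
  exact h y.1 y.2 hy

open scoped ENNReal

/-- `α_k(x)`: the supremum of all radii `r` for which there exist a `k`-dimensional
subspace `V ⊆ ℝⁿ` and a linear isometry `T : V → ℝᵐ` such that `u x − u y = T (x − y)`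
for all `y ∈ (x + V) ∩ B(x, r)` (closed ball); valued in `ℝ ∪ {∞} = ℝ≥0∞`. -/
noncomputable def alphaK {n m : ℕ}
    (u : EuclideanSpace ℝ (Fin n) → EuclideanSpace ℝ (Fin m)) (k : ℕ)
    (x : EuclideanSpace ℝ (Fin n)) : ℝ≥0∞ :=
  sSup {r : ℝ≥0∞ | ∃ V : Submodule ℝ (EuclideanSpace ℝ (Fin n)),
    Module.finrank ℝ V = k ∧
    ∃ T : EuclideanSpace ℝ (Fin n) →L[ℝ] EuclideanSpace ℝ (Fin m),
      (∀ v ∈ V, ‖T v‖ = ‖v‖) ∧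
      ∀ y : EuclideanSpace ℝ (Fin n), y - x ∈ V → edist y x ≤ r →
        u x - u y = T (x - y)}

/-- A subset of `ℝⁿ` is a convex cone if it is closed under addition and under
multiplication by nonnegative scalars. -/
def IsConvexConeSet {n : ℕ} (C : Set (EuclideanSpace ℝ (Fin n))) : Prop :=
  (∀ c ∈ C, ∀ t : ℝ, 0 ≤ t → t • c ∈ C) ∧ ∀ a ∈ C, ∀ b ∈ C, a + b ∈ C

/-- `C ∈ C_{n,k}(r)`: `C` is a `k`-dimensional convex cone in `ℝⁿ` containing points
`c₁, …, c_k` of norm at most `1` whose Gram matrix has determinant at least `r`. -/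
def MemCnk {n : ℕ} (k : ℕ) (r : ℝ) (C : Set (EuclideanSpace ℝ (Fin n))) : Prop :=
  IsConvexConeSet C ∧ Module.finrank ℝ (Submodule.span ℝ C) = k ∧
  ∃ c : Fin k → EuclideanSpace ℝ (Fin n),
    (∀ i, c i ∈ C ∧ ‖c i‖ ≤ 1) ∧
    r ≤ (Matrix.of fun i j => (inner ℝ (c i) (c j) : ℝ)).det

/-- `β_k(x)`: the supremum of all `r ≥ 0` for which there exist a cone `C ∈ C_{n,k}(r)`
and a linear isometry `T : span C → ℝᵐ` with `u x − u y = T (x − y)` for all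
`y ∈ (x + C) ∩ B(x, r)` (closed ball).  (For `k = m + 1` this vanishes identically,
in accordance with the convention `β_{m+1} ≡ 0`.) -/
noncomputable def betaK {n m : ℕ}
    (u : EuclideanSpace ℝ (Fin n) → EuclideanSpace ℝ (Fin m)) (k : ℕ)
    (x : EuclideanSpace ℝ (Fin n)) : ℝ :=
  sSup {r : ℝ | 0 ≤ r ∧ ∃ C : Set (EuclideanSpace ℝ (Fin n)), MemCnk k r C ∧
    ∃ T : EuclideanSpace ℝ (Fin n) →L[ℝ] EuclideanSpace ℝ (Fin m),
      (∀ v ∈ Submodule.span ℝ C, ‖T v‖ = ‖v‖) ∧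
      ∀ y : EuclideanSpace ℝ (Fin n), y - x ∈ C → ‖y - x‖ ≤ r →
        u x - u y = T (x - y)}


section Main
variable {u : EuclideanSpace ℝ (Fin n) → EuclideanSpace ℝ (Fin m)}

/-- forward, α part -/
lemma fwd_alpha {S : Set (EuclideanSpace ℝ (Fin n))} {k : ℕ} {x : EuclideanSpace ℝ (Fin n)}
    (hleaf : IsLeaf u S) (hdim : Module.finrank ℝ (vectorSpan ℝ S) = k)
    (hx : x ∈ intrinsicInterior ℝ S) : 0 < alphaK u k x := by
  obtain ⟨hxS, ε, hε, hball⟩ := relint_ball hx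
  have hb : ∀ v ∈ vectorSpan ℝ S, ‖v‖ ≤ ε/2 → x + v ∈ S := by
    intro v hv hvn
    have hmem : x + v ∈ affineSpan ℝ S := by
      have h1 : v ∈ (affineSpan ℝ S).direction := by
        rw [direction_affineSpan]; exact hv
      have := AffineSubspace.vadd_mem_of_mem_direction h1 (subset_affineSpan ℝ S hxS)
      simpa [vadd_eq_add, add_comm] using this
    refine hball _ hmem ?_
    rw [dist_eq_norm, add_sub_cancel_left]
    linarith
  obtain ⟨T, hT1, hT2⟩ := exists_clm_of_ball hleaf.1 hxS (by linarith : (0:ℝ) < ε/2) hb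
  have hmem : ENNReal.ofReal (ε/2) ∈ {r : ℝ≥0∞ | ∃ V : Submodule ℝ (EuclideanSpace ℝ (Fin n)),
      Module.finrank ℝ V = k ∧
      ∃ T : EuclideanSpace ℝ (Fin n) →L[ℝ] EuclideanSpace ℝ (Fin m),
        (∀ v ∈ V, ‖T v‖ = ‖v‖) ∧
        ∀ y : EuclideanSpace ℝ (Fin n), y - x ∈ V → edist y x ≤ ENNReal.ofReal (ε/2) →
          u x - u y = T (x - y)} := by
    refine ⟨vectorSpan ℝ S, hdim, T, hT1, fun y hyV hyr => ?_⟩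
    rw [edist_le_ofReal (by linarith)] at hyr
    have h2 := hT2 (y - x) hyV (by rwa [← dist_eq_norm])
    rw [add_sub_cancel] at h2
    have : x - y = -(y - x) := by abel
    rw [this, map_neg, ← h2]
    abel
  calc (0:ℝ≥0∞) < ENNReal.ofReal (ε/2) := by
        rw [ENNReal.ofReal_pos]; linarith
  _ ≤ alphaK u k x := le_sSup hmem

/-- forward, β part -/
lemma fwd_beta (hu : LipschitzWith 1 u) {S : Set (EuclideanSpace ℝ (Fin n))} {k : ℕ}
    {x : EuclideanSpace ℝ (Fin n)}
    (hleaf : IsLeaf u S) (hdim : Module.finrank ℝ (vectorSpan ℝ S) = k)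
    (hx : x ∈ intrinsicInterior ℝ S) : betaK u (k+1) x = 0 := by
  obtain ⟨hxS, ε, hε, hball⟩ := relint_ball hx
  refine le_antisymm (Real.sSup_le ?_ le_rfl) (Real.sSup_nonneg (fun r hr => hr.1))
  rintro r ⟨hr0, C, ⟨hCcone, hCrank, -⟩, T, hTiso, hTeq⟩
  by_contra hpos
  push_neg at hpos
  have hrpos : 0 < r := hpos
  -- every small cone point belongs to S
  have hconeS : ∀ c ∈ C, ‖c‖ ≤ r → x + c ∈ S := by
    intro c hc hcr
    by_contra hnot
    obtain ⟨z, hzS, hlt⟩ := hleaf.2 _ hnot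
    have hTc : u (x + c) - u x = T c := by
      have h1 := hTeq (x + c) (by rwa [add_sub_cancel_left]) (by rwa [add_sub_cancel_left])
      have h2 : x - (x + c) = -c := by abel
      rw [h2, map_neg] at h1
      have := congrArg Neg.neg h1
      rw [neg_neg, neg_sub] at this
      exact this
    have hpn : ‖u (x + c) - u x‖ = ‖c‖ := by
      rw [hTc]; exact hTiso c (Submodule.subset_span hc)
    have heq : ‖u (x + c) - u z‖ = ‖x + c - z‖ := by
      by_cases hzx : z = x
      · rw [hzx]
        have h3 : x + c - x = c := by abel
        rw [h3, hpn]
      · set w : EuclideanSpace ℝ (Fin n) := z - x with hw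
        have hw0 : w ≠ 0 := sub_ne_zero.2 hzx
        have hwn : 0 < ‖w‖ := norm_pos_iff.2 hw0
        set t : ℝ := ε / (2 * ‖w‖) with ht
        have ht0 : 0 < t := by positivity
        have htw : t * ‖w‖ = ε / 2 := by
          rw [ht]; field_simp
        set z' : EuclideanSpace ℝ (Fin n) := x + (-t) • w with hz'def
        have hz' : z' ∈ S := by
          apply hball
          · have h1 : w ∈ (affineSpan ℝ S).direction := by
              rw [direction_affineSpan]
              have := vsub_mem_vectorSpan ℝ hzS hxS
              simpa [vsub_eq_sub] using this
            have h2 := AffineSubspace.vadd_mem_of_mem_direction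
              (Submodule.smul_mem _ (-t) h1) (subset_affineSpan ℝ S hxS)
            simpa [hz'def, vadd_eq_add, add_comm] using h2
          · rw [hz'def, dist_eq_norm, add_sub_cancel_left, norm_smul, Real.norm_eq_abs,
              abs_neg, abs_of_pos ht0]
            rw [htw]; linarith
        set p : EuclideanSpace ℝ (Fin m) := u (x + c) - u x with hp
        set q : EuclideanSpace ℝ (Fin m) := u z - u x with hqd
        set q' : EuclideanSpace ℝ (Fin m) := u z' - u x with hq'd
        have hq : ‖q‖ = ‖w‖ := hleaf.1 z hzS x hxS
        have hq' : ‖q'‖ = t * ‖w‖ := by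
          rw [hq'd, hleaf.1 z' hz' x hxS, hz'def, add_sub_cancel_left, norm_smul,
            Real.norm_eq_abs, abs_neg, abs_of_pos ht0]
        have hqq' : ‖q - q'‖ = (1 + t) * ‖w‖ := by
          rw [hqd, hq'd, sub_sub_sub_cancel_right, hleaf.1 z hzS z' hz']
          have h4 : z - z' = (1 + t) • w := by rw [hz'def, hw]; module
          rw [h4, norm_smul, Real.norm_eq_abs, abs_of_pos (by linarith)]
        have hiq : ⟪q, q'⟫ = -(t * ‖w‖^2) := by
          have h5 := norm_sub_sq_real q q'
          rw [hqq', hq, hq'] at h5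
          nlinarith [h5]
        have hq'e : q' = -(t • q) := by
          have h6 : ⟪q, -q'⟫ = ‖q‖ * ‖-q'‖ := by
            rw [inner_neg_right, norm_neg, hq, hq', hiq]; ring
          have h7 := inner_eq_norm_mul_iff_real.1 h6
          rw [norm_neg, hq, hq'] at h7
          have h8 : ‖w‖ • ((t:ℝ) • q) = ‖w‖ • (-q') := by
            rw [smul_smul, ← h7, mul_comm t ‖w‖, mul_smul]
          have h9 := smul_right_injective (EuclideanSpace ℝ (Fin m)) (ne_of_gt hwn) h8
          rw [h9, neg_neg]
        have hpmq : p - q = u (x + c) - u z := by rw [hp, hqd, sub_sub_sub_cancel_right]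
        have hpmq' : p - q' = u (x + c) - u z' := by rw [hp, hq'd, sub_sub_sub_cancel_right]
        have hcw : x + c - z = c - w := by rw [hw]; abel
        have hcw' : x + c - z' = c + t • w := by rw [hz'def]; module
        have hL1 : ‖p - q‖ ≤ ‖c - w‖ := by
          rw [hpmq, ← hcw]
          have := hu.dist_le_mul (x + c) z
          simpa [dist_eq_norm] using this
        have hL2 : ‖p + t • q‖ ≤ ‖c + t • w‖ := by
          have h10 : p + t • q = p - q' := by rw [hq'e]; abel
          rw [h10, hpmq', ← hcw']
          have := hu.dist_le_mul (x + c) z'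
          simpa [dist_eq_norm] using this
        have hge : ⟪p, q⟫ ≥ ⟪c, w⟫ := by
          have hsq : ‖p - q‖^2 ≤ ‖c - w‖^2 := pow_le_pow_left₀ (norm_nonneg _) hL1 2
          have h11 := norm_sub_sq_real p q
          have h12 := norm_sub_sq_real c w
          rw [hpn, hq] at h11
          linarith [hsq, h11, h12]
        have hle : ⟪p, q⟫ ≤ ⟪c, w⟫ := by
          have hsq : ‖p + t • q‖^2 ≤ ‖c + t • w‖^2 := pow_le_pow_left₀ (norm_nonneg _) hL2 2
          have h11 := norm_add_sq_real p (t • q)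
          have h12 := norm_add_sq_real c (t • w)
          rw [real_inner_smul_right, norm_smul, Real.norm_eq_abs, abs_of_pos ht0] at h11 h12
          rw [hpn, hq] at h11
          have h13 : 2 * (t * ⟪p, q⟫) ≤ 2 * (t * ⟪c, w⟫) := by linarith [hsq, h11, h12]
          have h14 : t * ⟪p, q⟫ ≤ t * ⟪c, w⟫ := by linarith
          exact (mul_le_mul_iff_right₀ ht0).1 h14
        have hfin : ‖p - q‖^2 = ‖c - w‖^2 := by
          have h11 := norm_sub_sq_real p q
          have h12 := norm_sub_sq_real c w
          rw [hpn, hq] at h11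
          rw [h11, h12]
          have : ⟪p, q⟫ = ⟪c, w⟫ := le_antisymm hle hge
          rw [this]
        rw [hpmq] at hfin
        rw [hcw]
        have h15 := norm_nonneg (u (x + c) - u z)
        have h16 := norm_nonneg (c - w)
        nlinarith [hfin, h15, h16]
    exact absurd heq (ne_of_lt hlt)
  -- span C ≤ vectorSpan S
  have hspan : Submodule.span ℝ C ≤ vectorSpan ℝ S := by
    rw [Submodule.span_le]
    intro c hc
    rcases eq_or_ne c 0 with rfl | hc0
    · exact Submodule.zero_mem _
    · have hnorm : (0:ℝ) < ‖c‖ := norm_pos_iff.2 hc0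
      have hc' : (r/‖c‖) • c ∈ C := hCcone.1 c hc _ (by positivity)
      have hc'n : ‖(r/‖c‖) • c‖ ≤ r := by
        rw [norm_smul, Real.norm_eq_abs, abs_of_pos (by positivity), div_mul_cancel₀]
        exact ne_of_gt hnorm
      have hS' : x + (r/‖c‖) • c ∈ S := hconeS _ hc' hc'n
      have hmem : (r/‖c‖) • c ∈ vectorSpan ℝ S := by
        have := vsub_mem_vectorSpan ℝ hS' hxS
        simpa [vsub_eq_sub, add_sub_cancel_left] using this
      have h13 := Submodule.smul_mem (vectorSpan ℝ S) (‖c‖/r) hmem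
      have h14 : (‖c‖/r) * (r/‖c‖) = 1 := by
        field_simp
      rwa [smul_smul, h14, one_smul] at h13
  have hle := Submodule.finrank_mono hspan
  rw [hCrank, hdim] at hle
  omega

end Main

section Bwd
variable {u : EuclideanSpace ℝ (Fin n) → EuclideanSpace ℝ (Fin m)}

lemma det_bound {N : ℕ} (A : Matrix (Fin N) (Fin N) ℝ) (hA : ∀ i j, |A i j| ≤ 1) :
    A.det ≤ (Nat.factorial N : ℝ) := by
  rw [Matrix.det_apply]
  calc ∑ σ : Equiv.Perm (Fin N), Equiv.Perm.sign σ • ∏ i, A (σ i) i ≤ ∑ σ : Equiv.Perm (Fin N), (1:ℝ) := by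
        refine Finset.sum_le_sum (fun σ _ => ?_)
        have h2 : |(Equiv.Perm.sign σ : ℤ) • ∏ i, A (σ i) i| ≤ 1 := by
          rw [abs_zsmul]
          rcases Int.units_eq_one_or (Equiv.Perm.sign σ) with h | h <;>
            simp only [h] <;>
          · simp only [Units.val_one, Units.val_neg, abs_one, abs_neg, one_smul, one_mul]
            rw [Finset.abs_prod]
            exact Finset.prod_le_one (fun i _ => abs_nonneg _) (fun i _ => hA _ _)
        calc (Equiv.Perm.sign σ : ℤ) • ∏ i, A (σ i) i ≤ |(Equiv.Perm.sign σ : ℤ) • ∏ i, A (σ i) i| := le_abs_self _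
        _ ≤ 1 := h2
  _ = (Nat.factorial N : ℝ) := by
        rw [Finset.sum_const, Finset.card_univ, Fintype.card_perm, Fintype.card_fin, nsmul_eq_mul, mul_one]

end Bwd

section Bwd2
variable {u : EuclideanSpace ℝ (Fin n) → EuclideanSpace ℝ (Fin m)}

lemma beta_pos (hu : LipschitzWith 1 u) {M : Set (EuclideanSpace ℝ (Fin n))}
    (hMiso : ∀ y ∈ M, ∀ z ∈ M, ‖u y - u z‖ = ‖y - z‖)
    {x : EuclideanSpace ℝ (Fin n)} (hxM : x ∈ M)
    {V : Submodule ℝ (EuclideanSpace ℝ (Fin n))} {ε : ℝ}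
    (hKM : {y | y - x ∈ V ∧ ‖y - x‖ ≤ ε} ⊆ M)
    {T : EuclideanSpace ℝ (Fin n) →L[ℝ] EuclideanSpace ℝ (Fin m)}
    (hfz : ∀ v ∈ V, ‖v‖ ≤ ε → u (x + v) - u x = T v)
    (hTiso : ∀ v ∈ V, ‖T v‖ = ‖v‖) {k : ℕ} (hVfin : Module.finrank ℝ V = k) (hε : 0 < ε)
    {z₀ : EuclideanSpace ℝ (Fin n)} (hz₀M : z₀ ∈ M) (hz₀V : z₀ - x ∉ V) :
    0 < betaK u (k + 1) x := by
  classical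
  set w : EuclideanSpace ℝ (Fin n) := z₀ - x with hwdef
  have hz0 : z₀ = x + w := by rw [hwdef]; abel
  set Pw : EuclideanSpace ℝ (Fin n) := (V.orthogonalProjectionOnto w : EuclideanSpace ℝ (Fin n)) with hPwdef
  have hPwV : Pw ∈ V := SetLike.coe_mem _
  set w' : EuclideanSpace ℝ (Fin n) := w - Pw with hw'def
  have hw'perp : w' ∈ Vᗮ := Submodule.sub_starProjection_mem_orthogonal (K := V) w
  have hw'V : ∀ v ∈ V, ⟪v, w'⟫ = 0 := fun v hv => hw'perp v hv
  have hw'0 : w' ≠ 0 := by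
    intro h
    exact hz₀V ((sub_eq_zero.1 h) ▸ hPwV)
  have hw'n : (0:ℝ) < ‖w'‖ := norm_pos_iff.2 hw'0
  have hwPw : ⟪w, w'⟫ = ‖w'‖^2 := by
    have h1 : w = Pw + w' := by rw [hw'def]; abel
    calc ⟪w, w'⟫ = ⟪Pw + w', w'⟫ := by rw [← h1]
    _ = ⟪Pw, w'⟫ + ⟪w', w'⟫ := inner_add_left _ _ _
    _ = ‖w'‖^2 := by rw [hw'V Pw hPwV, real_inner_self_eq_norm_sq, zero_add]
  -- orthonormal basis of V indexed by Fin k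
  set b : OrthonormalBasis (Fin k) ℝ V := (stdOrthonormalBasis ℝ V).reindex (finCongr hVfin) with hbdef
  set e : Fin k → EuclideanSpace ℝ (Fin n) := fun i => (b i : EuclideanSpace ℝ (Fin n)) with hedef
  have he : Orthonormal ℝ e := onb_coe_orthonormal b
  have heV : ∀ i, e i ∈ V := fun i => SetLike.coe_mem _
  -- the cone C
  set C : Set (EuclideanSpace ℝ (Fin n)) :=
    {c | ∃ v ∈ V, ∃ t : ℝ, 0 ≤ t ∧ c = v + t • w} with hCdef
  have hVC : ∀ v ∈ V, v ∈ C := fun v hv => ⟨v, hv, 0, le_refl 0, by simp⟩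
  have hwC : w ∈ C := ⟨0, V.zero_mem, 1, zero_le_one, by simp⟩
  have hw'C : w' ∈ C := ⟨-Pw, V.neg_mem hPwV, 1, zero_le_one, by rw [hw'def]; module⟩
  have hCcone : IsConvexConeSet C := by
    constructor
    · rintro c ⟨v, hv, t, ht, rfl⟩ s hs
      exact ⟨s • v, V.smul_mem s hv, s * t, mul_nonneg hs ht, by rw [smul_add, smul_smul]⟩
    · rintro a ⟨v, hv, t, ht, rfl⟩ a2 ⟨v2, hv2, t2, ht2, rfl⟩
      exact ⟨v + v2, V.add_mem hv hv2, t + t2, by linarith, by rw [add_smul]; abel⟩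
  have hCspan : Submodule.span ℝ C = V ⊔ (ℝ ∙ w) := by
    apply le_antisymm
    · rw [Submodule.span_le]
      rintro c ⟨v, hv, t, ht, rfl⟩
      exact Submodule.add_mem _ (Submodule.mem_sup_left hv)
        (Submodule.mem_sup_right (Submodule.smul_mem _ t (Submodule.mem_span_singleton_self w)))
    · refine sup_le ?_ ?_
      · exact fun v hv => Submodule.subset_span (hVC v hv)
      · rw [Submodule.span_singleton_le_iff_mem]
        exact Submodule.subset_span hwC
  have hrank : Module.finrank ℝ (Submodule.span ℝ C) = k + 1 := by
    rw [hCspan]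
    have hinf : V ⊓ (ℝ ∙ w) = ⊥ := by
      rw [eq_bot_iff]
      rintro y ⟨hyV, hyw⟩
      obtain ⟨a, rfl⟩ := Submodule.mem_span_singleton.1 hyw
      rcases eq_or_ne a 0 with rfl | ha
      · simp
      · exfalso
        apply hz₀V
        have := V.smul_mem a⁻¹ hyV
        rwa [smul_smul, inv_mul_cancel₀ ha, one_smul] at this
    have := Submodule.finrank_sup_add_finrank_inf_eq V (ℝ ∙ w)
    rw [hinf, finrank_bot, add_zero, hVfin, finrank_span_singleton (by
      intro h; exact hz₀V (h ▸ V.zero_mem))] at this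
    exact this
  -- data for T'
  set q' : EuclideanSpace ℝ (Fin m) := (u z₀ - u x) - T Pw with hq'def
  have hMinner : ∀ y ∈ M, ∀ z ∈ M, ⟪u y - u x, u z - u x⟫ = ⟪y - x, z - x⟫ :=
    fun y hy z hz => iso_inner hMiso hxM hy hz
  have hTinner : ∀ v1 ∈ V, ∀ v2 ∈ V, ⟪T v1, T v2⟫ = ⟪v1, v2⟫ := by
    intro v1 hv1 v2 hv2
    refine polar_inner (hTiso v1 hv1) (hTiso v2 hv2) ?_
    rw [← map_sub]
    exact hTiso _ (V.sub_mem hv1 hv2)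
  have hz0u : ∀ v ∈ V, ⟪u z₀ - u x, T v⟫ = ⟪w, v⟫ := by
    intro v hv
    rcases eq_or_ne v 0 with rfl | hv0
    · simp
    · have hnorm : (0:ℝ) < ‖v‖ := norm_pos_iff.2 hv0
      set v' : EuclideanSpace ℝ (Fin n) := (ε/‖v‖) • v with hv'def
      have hv'V : v' ∈ V := V.smul_mem _ hv
      have hv'n : ‖v'‖ ≤ ε := by
        rw [hv'def, norm_smul, Real.norm_eq_abs, abs_of_pos (by positivity), div_mul_cancel₀]
        exact ne_of_gt hnorm
      have hm : x + v' ∈ M := hKM ⟨by rwa [add_sub_cancel_left], by rwa [add_sub_cancel_left]⟩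
      have h1 : ⟪u z₀ - u x, T v'⟫ = ⟪w, v'⟫ := by
        rw [← hfz v' hv'V hv'n]
        have h2 := hMinner z₀ hz₀M (x + v') hm
        rwa [add_sub_cancel_left] at h2
      rw [hv'def, map_smul, real_inner_smul_right, real_inner_smul_right] at h1
      exact mul_left_cancel₀ (by positivity) h1
  have hq'Tv : ∀ v ∈ V, ⟪q', T v⟫ = 0 := by
    intro v hv
    rw [hq'def, inner_sub_left, hz0u v hv, hTinner Pw hPwV v hv]
    have h1 : ⟪w, v⟫ - ⟪Pw, v⟫ = ⟪w', v⟫ := (inner_sub_left w Pw v).symm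
    rw [h1, real_inner_comm, hw'V v hv]
  have hq'n : ‖q'‖ = ‖w'‖ := by
    have huz : ‖u z₀ - u x‖ = ‖w‖ := hMiso z₀ hz₀M x hxM
    have e1 : ‖q'‖^2 = ‖u z₀ - u x‖^2 - 2*⟪u z₀ - u x, T Pw⟫ + ‖T Pw‖^2 :=
      norm_sub_sq_real _ _
    have e2 : ‖w'‖^2 = ‖w‖^2 - 2*⟪w, Pw⟫ + ‖Pw‖^2 := norm_sub_sq_real w Pw
    rw [huz, hz0u Pw hPwV, hTiso Pw hPwV] at e1
    nlinarith [norm_nonneg q', norm_nonneg w', e1, e2]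
  -- the linear map T'
  set T' : EuclideanSpace ℝ (Fin n) →L[ℝ] EuclideanSpace ℝ (Fin m) :=
    (∑ i, (innerSL ℝ (e i)).smulRight (T (e i)))
      + (innerSL ℝ ((‖w'‖⁻¹) • w')).smulRight ((‖w'‖⁻¹) • q') with hT'def
  have hT'apply : ∀ v, T' v = (∑ i, ⟪e i, v⟫ • T (e i))
      + (‖w'‖⁻¹ * ⟪w', v⟫) • ((‖w'‖⁻¹) • q') := by
    intro v
    rw [hT'def]
    simp [ContinuousLinearMap.sum_apply, real_inner_smul_left]
  have hT'V : ∀ v ∈ V, T' v = T v := by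
    intro v hv
    rw [hT'apply]
    have h1 : ⟪w', v⟫ = 0 := by rw [real_inner_comm]; exact hw'V v hv
    rw [h1, mul_zero, zero_smul, add_zero]
    have h2 : ∑ i, ⟪e i, v⟫ • T (e i) = T (∑ i, ⟪e i, v⟫ • e i) := by
      rw [map_sum]
      congr 1
      ext i
      rw [map_smul]
    rw [h2, onb_coe_repr b hv]
  have hT'w' : T' w' = q' := by
    rw [hT'apply]
    have h1 : ∀ i, ⟪e i, w'⟫ = 0 := fun i => hw'V (e i) (heV i)
    simp only [h1, zero_smul, Finset.sum_const_zero, zero_add]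
    rw [real_inner_self_eq_norm_sq, smul_smul]
    have h2 : ‖w'‖⁻¹ * ‖w'‖^2 * ‖w'‖⁻¹ = 1 := by
      field_simp
    rw [h2, one_smul]
  have hT'w : T' w = u z₀ - u x := by
    have h1 : w = Pw + w' := by rw [hw'def]; abel
    rw [h1, map_add, hT'V Pw hPwV, hT'w', hq'def]
    abel
  -- T' is isometric on span C
  have hT'iso : ∀ v ∈ Submodule.span ℝ C, ‖T' v‖ = ‖v‖ := by
    intro v hv
    rw [hCspan] at hv
    obtain ⟨a, ha, b2, hb2, rfl⟩ := Submodule.mem_sup.1 hv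
    obtain ⟨s, rfl⟩ := Submodule.mem_span_singleton.1 hb2
    set a' : EuclideanSpace ℝ (Fin n) := a + s • Pw with ha'def
    have ha'V : a' ∈ V := V.add_mem ha (V.smul_mem s hPwV)
    have hsplit : a + s • w = a' + s • w' := by rw [ha'def, hw'def]; module
    rw [hsplit]
    have hlin : T' (a' + s • w') = T a' + s • q' := by
      rw [map_add, map_smul, hT'V a' ha'V, hT'w']
    rw [hlin]
    have hq'a : ⟪T a', q'⟫ = 0 := by rw [real_inner_comm]; exact hq'Tv a' ha'V
    have h1 : ‖T a' + s • q'‖^2 = ‖a'‖^2 + s^2 * ‖w'‖^2 := by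
      rw [norm_add_sq_real, real_inner_smul_right, hq'a, mul_zero, norm_smul,
        hTiso a' ha'V, hq'n, Real.norm_eq_abs, mul_pow, sq_abs]
      ring
    have h2 : ‖a' + s • w'‖^2 = ‖a'‖^2 + s^2 * ‖w'‖^2 := by
      rw [norm_add_sq_real, real_inner_smul_right, hw'V a' ha'V, mul_zero, norm_smul,
        Real.norm_eq_abs, mul_pow, sq_abs]
      ring
    nlinarith [norm_nonneg (T a' + s • q'), norm_nonneg (a' + s • w'), h1, h2]
  -- radius
  set Nc : ℝ := 1 + ‖w‖/‖w'‖ with hNdef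
  have hN : 0 < Nc := by positivity
  set δ : ℝ := min (min (ε/(2*Nc)) (‖w'‖/2)) 1 with hδdef
  have hδpos : 0 < δ := by
    refine lt_min (lt_min (by positivity) (by positivity)) one_pos
  have hδ1 : δ ≤ 1 := min_le_right _ _
  have hδN : δ ≤ ε/(2*Nc) := le_trans (min_le_left _ _) (min_le_left _ _)
  have hδw : δ ≤ ‖w'‖/2 := le_trans (min_le_left _ _) (min_le_right _ _)
  -- the representation formula on the cone
  have hT'eq : ∀ y : EuclideanSpace ℝ (Fin n), y - x ∈ C → ‖y - x‖ ≤ δ →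
      u x - u y = T' (x - y) := by
    intro y hyC hyn
    obtain ⟨v, hvV, t, ht0, hcdecomp⟩ := hyC
    have hinner_c : ⟪y - x, w'⟫ = t * ‖w'‖^2 := by
      rw [hcdecomp, inner_add_left, real_inner_smul_left, hw'V v hvV, hwPw, zero_add]
    have htb : t ≤ δ / ‖w'‖ := by
      have hCS := real_inner_le_norm (y - x) w'
      rw [hinner_c] at hCS
      have h3 : ‖y - x‖ * ‖w'‖ ≤ δ * ‖w'‖ := mul_le_mul_of_nonneg_right hyn (norm_nonneg _)
      rw [div_eq_mul_inv]
      have h4 : t * ‖w'‖^2 ≤ δ * ‖w'‖ := le_trans hCS h3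
      rw [pow_two, ← mul_assoc] at h4
      have h5 : t * ‖w'‖ ≤ δ := (mul_le_mul_iff_left₀ hw'n).1 h4
      have h6 := mul_le_mul_of_nonneg_right h5 (inv_nonneg.2 (norm_nonneg w'))
      rwa [mul_assoc, mul_inv_cancel₀ (ne_of_gt hw'n), mul_one] at h6
    have ht12 : t ≤ 1/2 := by
      have h6 : δ / ‖w'‖ ≤ 1/2 := by
        rw [div_le_div_iff₀ hw'n (by norm_num : (0:ℝ) < 2)]
        linarith
      linarith
    have hvb : ‖v‖ ≤ ε/2 := by
      have h1 : v = (y - x) - t • w := by rw [hcdecomp]; abel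
      have h2 : ‖v‖ ≤ ‖y - x‖ + t * ‖w‖ := by
        rw [h1]
        refine (norm_sub_le _ _).trans ?_
        rw [norm_smul, Real.norm_eq_abs, abs_of_nonneg ht0]
      have h3 : t * ‖w‖ ≤ (δ/‖w'‖) * ‖w‖ := mul_le_mul_of_nonneg_right htb (norm_nonneg w)
      have h4 : δ + δ/‖w'‖*‖w‖ = δ * Nc := by
        rw [hNdef]
        field_simp
      have h5 : δ * Nc ≤ ε/2 := by
        have := mul_le_mul_of_nonneg_right hδN (le_of_lt hN)
        rw [div_mul_eq_mul_div, mul_comm] at this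
        calc δ * Nc ≤ ε * Nc / (2 * Nc) := by rw [mul_comm δ Nc]; exact this
        _ = ε/2 := by field_simp
      linarith
    have h1t : (0:ℝ) < 1 - t := by linarith
    set p : EuclideanSpace ℝ (Fin n) := x + (1-t)⁻¹ • v with hpdef
    have hpK : p ∈ {y | y - x ∈ V ∧ ‖y - x‖ ≤ ε} := by
      constructor
      · rw [hpdef, add_sub_cancel_left]
        exact V.smul_mem _ hvV
      · rw [hpdef, add_sub_cancel_left, norm_smul, Real.norm_eq_abs,
          abs_of_pos (inv_pos.2 h1t)]
        have h7 : (1-t)⁻¹ ≤ 2 := by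
          rw [inv_le_comm₀ h1t (by norm_num : (0:ℝ) < 2)]
          linarith
        calc (1-t)⁻¹ * ‖v‖ ≤ 2 * (ε/2) :=
          mul_le_mul h7 hvb (norm_nonneg v) (by norm_num)
        _ = ε := by ring
    have hpM : p ∈ M := hKM hpK
    have hpz : ‖u p - u z₀‖ = ‖p - z₀‖ := hMiso p hpM z₀ hz₀M
    have hyseg : y = (1-t) • p + t • z₀ := by
      have hy' : y = x + (v + t • w) := by
        rw [← hcdecomp]; abel
      rw [hy', hpdef, hz0, smul_add, smul_add, smul_smul,
        mul_inv_cancel₀ (ne_of_gt h1t), one_smul]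
      module
    have hseg := segment_rigidity hu hpz ht0 (by linarith)
    rw [← hyseg] at hseg
    have hup : u p - u x = (1-t)⁻¹ • T v := by
      have hpx : p - x = (1-t)⁻¹ • v := by rw [hpdef]; abel
      have h8 : ‖(1-t)⁻¹ • v‖ ≤ ε := by rw [← hpx]; exact hpK.2
      have h9 := hfz _ (V.smul_mem (1-t)⁻¹ hvV) h8
      rw [map_smul] at h9
      rw [hpdef]
      exact h9
    have hfinal : u x - u y = -(T v + t • (u z₀ - u x)) := by
      rw [hseg]
      have hmod : u x - ((1-t) • u p + t • u z₀)
          = -((1-t) • (u p - u x) + t • (u z₀ - u x)) := by module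
      rw [hmod, hup, smul_smul, mul_inv_cancel₀ (ne_of_gt h1t), one_smul]
    have hxy : x - y = -(v + t • w) := by
      rw [← hcdecomp]; abel
    rw [hfinal, hxy, map_neg, map_add, map_smul, hT'V v hvV, hT'w]
  -- the orthonormal family for the Gram matrix
  set e' : Fin (k+1) → EuclideanSpace ℝ (Fin n) := Fin.snoc e ((‖w'‖⁻¹) • w') with he'def
  have he'i : ∀ (i : Fin k), e' (Fin.castSucc i) = e i := fun i => Fin.snoc_castSucc _ _ _
  have he'l : e' (Fin.last k) = (‖w'‖⁻¹) • w' := Fin.snoc_last _ _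
  have hinv1 : ‖w'‖⁻¹ * (‖w'‖^2 * ‖w'‖⁻¹) = 1 := by
    rw [pow_two]
    field_simp
  have horth : ∀ i j, ⟪e' i, e' j⟫ = if i = j then (1:ℝ) else 0 := by
    intro i j
    induction i using Fin.lastCases with
    | last =>
      induction j using Fin.lastCases with
      | last =>
        rw [he'l, if_pos rfl, real_inner_smul_left, real_inner_smul_right,
          real_inner_self_eq_norm_sq]
        rw [← mul_assoc] at hinv1 ⊢
        linarith [hinv1]
      | cast j =>
        rw [he'l, he'i, if_neg (Fin.castSucc_lt_last j).ne', real_inner_smul_left,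
          real_inner_comm, hw'V (e j) (heV j), mul_zero]
    | cast i =>
      induction j using Fin.lastCases with
      | last =>
        rw [he'l, he'i, if_neg (Fin.castSucc_lt_last i).ne, real_inner_smul_right,
          hw'V (e i) (heV i), mul_zero]
      | cast j =>
        rw [he'i, he'i]
        have := orthonormal_iff_ite.1 he i j
        rw [this]
        simp [Fin.castSucc_inj]
  have hgram : (Matrix.of fun i j => (inner ℝ (e' i) (e' j) : ℝ)).det = 1 := by
    have hm : (Matrix.of fun i j => (inner ℝ (e' i) (e' j) : ℝ))
        = (1 : Matrix (Fin (k+1)) (Fin (k+1)) ℝ) := by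
      ext i j
      rw [Matrix.of_apply, horth i j, Matrix.one_apply]
    rw [hm, Matrix.det_one]
  have he'C : ∀ i, e' i ∈ C ∧ ‖e' i‖ ≤ 1 := by
    intro i
    induction i using Fin.lastCases with
    | last =>
      constructor
      · rw [he'l]
        exact hCcone.1 w' hw'C _ (inv_nonneg.2 (norm_nonneg w'))
      · rw [he'l, norm_smul, Real.norm_eq_abs, abs_of_pos (inv_pos.2 hw'n),
          inv_mul_cancel₀ (ne_of_gt hw'n)]
    | cast i =>
      constructor
      · rw [he'i]
        exact hVC _ (heV i)
      · rw [he'i, he.1 i]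
  -- conclude
  rw [betaK]
  have hbdd : BddAbove {r : ℝ | 0 ≤ r ∧ ∃ C : Set (EuclideanSpace ℝ (Fin n)),
      MemCnk (k+1) r C ∧
      ∃ T : EuclideanSpace ℝ (Fin n) →L[ℝ] EuclideanSpace ℝ (Fin m),
        (∀ v ∈ Submodule.span ℝ C, ‖T v‖ = ‖v‖) ∧
        ∀ y : EuclideanSpace ℝ (Fin n), y - x ∈ C → ‖y - x‖ ≤ r →
          u x - u y = T (x - y)} := by
    refine ⟨(Nat.factorial (k+1) : ℝ), ?_⟩
    rintro r ⟨hr0, C2, ⟨-, -, c2, hc2, hdet⟩, -⟩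
    refine hdet.trans (det_bound _ ?_)
    intro i j
    rw [Matrix.of_apply]
    refine (abs_real_inner_le_norm (c2 i) (c2 j)).trans ?_
    calc ‖c2 i‖ * ‖c2 j‖ ≤ 1 * 1 :=
      mul_le_mul (hc2 i).2 (hc2 j).2 (norm_nonneg _) zero_le_one
    _ = 1 := one_mul 1
  refine lt_of_lt_of_le hδpos (le_csSup hbdd ?_)
  refine ⟨hδpos.le, C, ⟨hCcone, hrank, e', he'C, ?_⟩, T', hT'iso, hT'eq⟩
  rw [hgram]
  exact hδ1

lemma bwd (hu : LipschitzWith 1 u) {k : ℕ} {x : EuclideanSpace ℝ (Fin n)}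
    (hα : 0 < alphaK u k x) (hβ : betaK u (k + 1) x = 0) :
    ∃ S : Set (EuclideanSpace ℝ (Fin n)), IsLeaf u S ∧
      Module.finrank ℝ (vectorSpan ℝ S) = k ∧ x ∈ intrinsicInterior ℝ S := by
  classical
  -- extract a positive radius witness from alphaK
  rw [alphaK] at hα
  obtain ⟨ρ, hρA, hρpos⟩ := lt_sSup_iff.1 hα
  obtain ⟨V, hVfin, T, hTiso, hTeq⟩ := hρA
  obtain ⟨ε, hε, hερ⟩ : ∃ ε : ℝ, 0 < ε ∧ ENNReal.ofReal ε ≤ ρ := by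
    rcases eq_or_ne ρ ⊤ with rfl | hfin
    · exact ⟨1, one_pos, le_top⟩
    · exact ⟨ρ.toReal, ENNReal.toReal_pos (ne_of_gt hρpos) hfin,
        by rw [ENNReal.ofReal_toReal hfin]⟩
  have hT : ∀ y : EuclideanSpace ℝ (Fin n), y - x ∈ V → ‖y - x‖ ≤ ε →
      u x - u y = T (x - y) := by
    intro y hyV hyn
    refine hTeq y hyV (le_trans ?_ hερ)
    rw [edist_dist]
    exact ENNReal.ofReal_le_ofReal (by rwa [dist_eq_norm])
  have hfz : ∀ v ∈ V, ‖v‖ ≤ ε → u (x + v) - u x = T v := by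
    intro v hv hvn
    have h1 := hT (x + v) (by rwa [add_sub_cancel_left]) (by rwa [add_sub_cancel_left])
    have h2 : x - (x + v) = -v := by abel
    rw [h2, map_neg] at h1
    have := congrArg Neg.neg h1
    rwa [neg_neg, neg_sub] at this
  -- the K ball
  set K : Set (EuclideanSpace ℝ (Fin n)) := {y | y - x ∈ V ∧ ‖y - x‖ ≤ ε} with hKdef
  have hxK : x ∈ K := ⟨by simp, by simpa using hε.le⟩
  have hKiso : ∀ y ∈ K, ∀ z ∈ K, ‖u y - u z‖ = ‖y - z‖ := by
    rintro y ⟨hyV, hyn⟩ z ⟨hzV, hzn⟩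
    have h1 := hT y hyV hyn
    have h2 := hT z hzV hzn
    have h3 : u y - u z = T (y - z) := by
      have := congrArg₂ (fun a b => a - b) h2 h1
      simpa [map_sub] using this
    rw [h3]
    have h4 : y - z ∈ V := by
      have := V.sub_mem hyV hzV
      rwa [sub_sub_sub_cancel_right] at this
    exact hTiso _ h4
  -- Zorn's lemma: maximal isometric superset of K
  set coll : Set (Set (EuclideanSpace ℝ (Fin n))) :=
    {A | K ⊆ A ∧ ∀ y ∈ A, ∀ z ∈ A, ‖u y - u z‖ = ‖y - z‖} with hcolldef
  have hKcoll : K ∈ coll := ⟨le_refl _, hKiso⟩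
  have hchainub : ∀ c ⊆ coll, IsChain (· ⊆ ·) c → c.Nonempty →
      ∃ ub ∈ coll, ∀ s ∈ c, s ⊆ ub := by
    intro c hcsub hchain hcne
    refine ⟨⋃₀ c, ⟨?_, ?_⟩, fun s hs => Set.subset_sUnion_of_mem hs⟩
    · obtain ⟨A, hA⟩ := hcne
      exact (hcsub hA).1.trans (Set.subset_sUnion_of_mem hA)
    · rintro y ⟨A, hA, hyA⟩ z ⟨B, hB, hzB⟩
      rcases hchain.total hA hB with h | h
      · exact (hcsub hB).2 y (h hyA) z hzB
      · exact (hcsub hA).2 y hyA z (h hzB)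
  obtain ⟨M, hKM, hMmax⟩ := zorn_subset_nonempty coll hchainub K hKcoll
  have hMiso : ∀ y ∈ M, ∀ z ∈ M, ‖u y - u z‖ = ‖y - z‖ := hMmax.1.2
  have hxM : x ∈ M := hKM hxK
  have hKMsub : K ⊆ M := hKM
  -- leaf property
  have hleaf : IsLeaf u M := by
    refine ⟨hMiso, fun y hy => ?_⟩
    by_contra hcon
    push_neg at hcon
    have hforall : ∀ z ∈ M, ‖u y - u z‖ = ‖y - z‖ := by
      intro z hz
      refine le_antisymm ?_ (hcon z hz)
      have := hu.dist_le_mul y z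
      simpa [dist_eq_norm] using this
    have hM' : insert y M ∈ coll := by
      refine ⟨hKMsub.trans (Set.subset_insert _ _), ?_⟩
      rintro a (rfl | ha) b (rfl | hb)
      · simp
      · exact hforall b hb
      · rw [norm_sub_rev (u a), norm_sub_rev a]
        exact hforall a ha
      · exact hMiso a ha b hb
    have := hMmax.2 hM' (Set.subset_insert y M)
    exact hy (this (Set.mem_insert y M))
  -- V ≤ vectorSpan M
  have hVM : V ≤ vectorSpan ℝ M := by
    intro v hv
    rcases eq_or_ne v 0 with rfl | hv0
    · exact Submodule.zero_mem _
    · have hnorm : (0:ℝ) < ‖v‖ := norm_pos_iff.2 hv0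
      have hv' : (ε/‖v‖) • v ∈ V := V.smul_mem _ hv
      have hv'n : ‖(ε/‖v‖) • v‖ ≤ ε := by
        rw [norm_smul, Real.norm_eq_abs, abs_of_pos (by positivity), div_mul_cancel₀]
        exact ne_of_gt hnorm
      have hK' : x + (ε/‖v‖) • v ∈ K := by
        constructor
        · rwa [add_sub_cancel_left]
        · rwa [add_sub_cancel_left]
      have hmem : (ε/‖v‖) • v ∈ vectorSpan ℝ M := by
        have := vsub_mem_vectorSpan ℝ (hKMsub hK') hxM
        simpa [vsub_eq_sub, add_sub_cancel_left] using this
      have h13 := Submodule.smul_mem (vectorSpan ℝ M) (‖v‖/ε) hmem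
      have h14 : (‖v‖/ε) * (ε/‖v‖) = 1 := by field_simp
      rwa [smul_smul, h14, one_smul] at h13
  have hdimge : k ≤ Module.finrank ℝ (vectorSpan ℝ M) := by
    rw [← hVfin]
    exact Submodule.finrank_mono hVM
  -- the dimension cannot exceed k, else betaK (k+1) would be positive
  have hdimle : Module.finrank ℝ (vectorSpan ℝ M) ≤ k := by
    by_contra hgt
    push_neg at hgt
    obtain ⟨z₀, hz₀M, hz₀V⟩ : ∃ z₀ ∈ M, z₀ - x ∉ V := by
      by_contra hall
      push_neg at hall
      have : vectorSpan ℝ M ≤ V := by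
        rw [vectorSpan_def, Submodule.span_le]
        rintro w ⟨y, hy, z, hz, rfl⟩
        have h2 := V.sub_mem (hall y hy) (hall z hz)
        have h1 : (y - x) - (z - x) = y -ᵥ z := by
          rw [vsub_eq_sub]; abel
        rwa [h1] at h2
      have := Submodule.finrank_mono this
      rw [hVfin] at this
      omega
    exact absurd hβ (ne_of_gt (beta_pos hu hMiso hxM hKMsub hfz hTiso hVfin hε hz₀M hz₀V))
  -- assemble
  have hdim : Module.finrank ℝ (vectorSpan ℝ M) = k := le_antisymm hdimle hdimge
  have hVeq : V = vectorSpan ℝ M := by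
    refine Submodule.eq_of_le_of_finrank_le hVM ?_
    rw [hdim, hVfin]
  refine ⟨M, hleaf, hdim, relint_of_ball hxM hε ?_⟩
  intro y hy hdist
  have h1 : y - x ∈ vectorSpan ℝ M := by
    have h2 : y -ᵥ x ∈ (affineSpan ℝ M).direction :=
      AffineSubspace.vsub_mem_direction hy (subset_affineSpan ℝ M hxM)
    rwa [direction_affineSpan, vsub_eq_sub] at h2
  rw [← hVeq] at h1
  exact hKMsub ⟨h1, by rw [← dist_eq_norm]; exact le_of_lt hdist⟩

end Bwd2

/-- Let `u : ℝⁿ → ℝᵐ` be `1`-Lipschitz and `k ∈ {1, …, m}`.  A point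
`x ∈ ℝⁿ` belongs to the relative interior of a leaf of `u` of dimension `k` if and only
if `α_k(x) > 0` and `β_{k+1}(x) = 0`. -/
theorem stmt_15 {n m : ℕ} (u : EuclideanSpace ℝ (Fin n) → EuclideanSpace ℝ (Fin m))
    (hu : LipschitzWith 1 u) (k : ℕ) (hk1 : 1 ≤ k) (hkm : k ≤ m)
    (x : EuclideanSpace ℝ (Fin n)) :
    (∃ S : Set (EuclideanSpace ℝ (Fin n)), IsLeaf u S ∧
        Module.finrank ℝ (vectorSpan ℝ S) = k ∧ x ∈ intrinsicInterior ℝ S) ↔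
      (0 < alphaK u k x ∧ betaK u (k + 1) x = 0) := by
  constructor
  · rintro ⟨S, hleaf, hdim, hx⟩
    exact ⟨fwd_alpha hleaf hdim hx, fwd_beta hu hleaf hdim hx⟩
  · rintro ⟨hα, hβ⟩
    exact bwd hu hα hβ
end
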